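/- Let (K, ν, Γ) be a valued field, γ ∈ Γ with γ ≥ 0, and a, b ∈ K not both zero. Then 0 belongs to the sumset {x + y : x ∈ a(1+m^γ), y ∈ b(1+m^γ)} if and only if this sumset equals m^{γ + min(ν(a), ν(b))} = {x ∈ K : ν(x) > γ + min(ν(a), ν(b))}. -/

import Mathlib

open Multiplicative WithZero Filter

noncomputable section

/-- The multiplicative value group `ℚₘ₀` used for normalized valuations:
`expQ q` corresponds to the additive value `q`. -/
abbrev QM0 : Type := WithZero (Multiplicative ℚ)

/-- `expQ q` is the element of `ℚₘ₀` corresponding to the additive value `q`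
(so that `v x = expQ q` means `ν(x) = q` additively). -/
def expQ (q : ℚ) : QM0 := ((Multiplicative.ofAdd (-q) : Multiplicative ℚ) : QM0)

section Hyper

variable {K : Type*} [Field K] {Γ₀ : Type*} [LinearOrderedCommGroupWithZero Γ₀]

/-- `hrel v γ a b` says that `b` belongs to the coset `a·(1+𝔪^γ)`,
where `𝔪^γ = {x : ν(x) > γ}` (multiplicatively: `v x < γ`). -/
def hrel (v : Valuation K Γ₀) (γ : Γ₀) (a b : K) : Prop :=
  ∃ u : K, v (u - 1) < γ ∧ b = a * u

/-- The coset `a·(1+𝔪^γ)` as a subset of `K`. -/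
def coset (v : Valuation K Γ₀) (γ : Γ₀) (a : K) : Set K := {b | hrel v γ a b}

/-- `hsumMem v γ a b c` says `[c] ∈ [a] + [b]` in the valued hyperfield `H_γ(K)`. -/
def hsumMem (v : Valuation K Γ₀) (γ : Γ₀) (a b c : K) : Prop :=
  ∃ x y : K, hrel v γ a x ∧ hrel v γ b y ∧ hrel v γ (x + y) c

/-- The valued hyperfield `H_γ(K) = K/(1+𝔪^γ)`. -/
def Hyp (v : Valuation K Γ₀) (γ : Γ₀) : Type _ := Quot (hrel v γ)

/-- The class `[a]_γ ∈ H_γ(K)`. -/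
def hmk (v : Valuation K Γ₀) (γ : Γ₀) (a : K) : Hyp v γ := Quot.mk _ a

end Hyper

section HypHom

variable {K₁ K₂ : Type*} [Field K₁] [Field K₂]
variable {Γ₁ Γ₂ : Type*} [LinearOrderedCommGroupWithZero Γ₁] [LinearOrderedCommGroupWithZero Γ₂]

/-- A homomorphism of valued hyperfields `H_γ(K₁) → H_δ(K₂)`:
`f([0]) = [0]`, `f([1]) = [1]`, `f` is multiplicative, `f(α + β) ⊆ f(α) + f(β)`
and `ν(α) ≤ ν(β) ↔ ν(f α) ≤ ν(f β)` (stated here multiplicatively). -/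
structure HypHom (v₁ : Valuation K₁ Γ₁) (γ : Γ₁) (v₂ : Valuation K₂ Γ₂) (δ : Γ₂) where
  toFun : Hyp v₁ γ → Hyp v₂ δ
  map_zero' : toFun (hmk v₁ γ 0) = hmk v₂ δ 0
  map_one' : toFun (hmk v₁ γ 1) = hmk v₂ δ 1
  map_mul' : ∀ (a b : K₁) (a' b' : K₂), toFun (hmk v₁ γ a) = hmk v₂ δ a' →
    toFun (hmk v₁ γ b) = hmk v₂ δ b' → toFun (hmk v₁ γ (a * b)) = hmk v₂ δ (a' * b')
  map_hsum' : ∀ (a b c : K₁) (a' b' c' : K₂), toFun (hmk v₁ γ a) = hmk v₂ δ a' →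
    toFun (hmk v₁ γ b) = hmk v₂ δ b' → toFun (hmk v₁ γ c) = hmk v₂ δ c' →
    hsumMem v₁ γ a b c → hsumMem v₂ δ a' b' c'
  val_le_iff' : ∀ (a b : K₁) (a' b' : K₂), toFun (hmk v₁ γ a) = hmk v₂ δ a' →
    toFun (hmk v₁ γ b) = hmk v₂ δ b' → (v₁ a ≤ v₁ b ↔ v₂ a' ≤ v₂ b')

/-- A homomorphism of valued hyperfields is *over `p`* if `f([p]) = [p]`. -/
def HypHom.OverP {v₁ : Valuation K₁ Γ₁} {γ : Γ₁} {v₂ : Valuation K₂ Γ₂} {δ : Γ₂}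
    (p : ℕ) (f : HypHom v₁ γ v₂ δ) : Prop :=
  f.toFun (hmk v₁ γ (p : K₁)) = hmk v₂ δ (p : K₂)

end HypHom

section CDVF

variable (K : Type*) [Field K] [Valued K QM0]

/-- `K` is a complete discrete valued field of mixed characteristic `(0,p)` with
perfect residue field and ramification index `e`, with the valuation normalized so
that `ν(p) = 1` and `ν(K^×) = (1/e)ℤ`.  Perfectness of the residue field is expressed
as surjectivity of the Frobenius on residues. -/
structure IsCompleteDVF (p e : ℕ) : Prop where
  prime : p.Prime
  charZero : CharZero K
  complete : CompleteSpace K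
  epos : 0 < e
  v_p : Valued.v (p : K) = expQ 1
  discrete : ∀ x : K, x ≠ 0 → ∃ k : ℤ, Valued.v x = expQ ((k : ℚ) / e)
  exists_unif : ∃ π : K, Valued.v π = expQ (1 / e)
  perfectResidue : ∀ x : K, Valued.v x ≤ 1 → ∃ y : K, Valued.v y ≤ 1 ∧ Valued.v (x - y ^ p) < 1

/-- The cut-off value for the `n`-th valued hyperfield `H_n(K) = K/(1+𝔪^n)`:
`𝔪^n = {x : ν(x) > (n-1)/e}` when the ramification index is `e` and `ν(p) = 1`. -/
def hnγ (e n : ℕ) : QM0 := expQ (((n : ℚ) - 1) / e)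

/-- The set of Teichmüller representatives: elements of the valuation ring which are
`p^s`-th powers in the valuation ring for every `s`. -/
def Teich (p : ℕ) : Set K :=
  {a | Valued.v a ≤ 1 ∧ ∀ s : ℕ, ∃ b : K, Valued.v b ≤ 1 ∧ b ^ p ^ s = a}

/-- The Witt subring of `K`: the set of (convergent) sums `Σ s_k p^k` with all
`s_k` Teichmüller representatives. -/
def WittPart (p : ℕ) : Set K :=
  {x | ∃ s : ℕ → K, (∀ k, s k ∈ Teich K p) ∧
    Tendsto (fun n => ∑ k ∈ Finset.range n, s k * (p : K) ^ k) atTop (nhds x)}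

end CDVF

/-- For a valued field `(K, ν, Γ)`, `γ ∈ Γ` with `γ ≥ 0`, and `a, b ∈ K`
not both zero: `0` belongs to the sumset `{x + y : x ∈ a(1+𝔪^γ), y ∈ b(1+𝔪^γ)}` if and
only if this sumset equals `𝔪^{γ + min(ν a, ν b)} = {x : ν(x) > γ + min(ν a, ν b)}`. -/
theorem statement1 {K : Type*} [Field K] {Γ₀ : Type*} [LinearOrderedCommGroupWithZero Γ₀]
    (v : Valuation K Γ₀) (γ : Γ₀) (hγ_le : γ ≤ 1) (hγ_mem : ∃ x : K, x ≠ 0 ∧ v x = γ)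
    (a b : K) (hab : ¬(a = 0 ∧ b = 0)) :
    (0 : K) ∈ {z : K | ∃ x ∈ coset v γ a, ∃ y ∈ coset v γ b, z = x + y} ↔
      {z : K | ∃ x ∈ coset v γ a, ∃ y ∈ coset v γ b, z = x + y} =
        {z : K | v z < γ * max (v a) (v b)} := by
  have hγ0 : γ ≠ 0 := by
    obtain ⟨x0, hx0, hvx0⟩ := hγ_mem
    exact hvx0 ▸ (fun h => hx0 ((Valuation.zero_iff v).mp h))
  have hunit : ∀ u : K, v (u - 1) < γ → v u = 1 := by
    intro u hu
    have : v (u - 1) < 1 := lt_of_lt_of_le hu hγ_le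
    have := Valuation.map_one_add_of_lt v this
    simpa using this
  constructor
  · rintro ⟨x, ⟨u, hu, rfl⟩, y, ⟨w, hw, rfl⟩, h0⟩
    have hsum : a * u + b * w = 0 := h0.symm
    have hvu : v u = 1 := hunit u hu
    have hvw : v w = 1 := hunit w hw
    have hau : a * u = -(b * w) := by linear_combination hsum
    have hvab : v a = v b := by
      have : v (a * u) = v (b * w) := by rw [hau, Valuation.map_neg]
      simpa [Valuation.map_mul, hvu, hvw] using this
    have ha0 : a ≠ 0 := by
      rintro rfl
      have hb0 : b = 0 := by
        have := hvab.symm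
        simpa [Valuation.zero_iff] using this
      exact hab ⟨rfl, hb0⟩
    have hva0 : v a ≠ 0 := (Valuation.ne_zero_iff v).mpr ha0
    have hmax : max (v a) (v b) = v a := by rw [← hvab, max_self]
    ext z
    simp only [Set.mem_setOf_eq, hmax]
    constructor
    · rintro ⟨x, ⟨u', hu', rfl⟩, y, ⟨w', hw', rfl⟩, rfl⟩
      have hz : a * u' + b * w' = a * (u' - u) + b * (w' - w) := by
        linear_combination hsum
      rw [hz]
      have h1 : v (a * (u' - u)) < γ * v a := by
        rw [Valuation.map_mul, mul_comm γ (v a)]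
        have : v (u' - u) < γ := by
          have : v (u' - u) ≤ max (v (u' - 1)) (v (u - 1)) := by
            have : u' - u = (u' - 1) - (u - 1) := by ring
            rw [this]; exact Valuation.map_sub v _ _
          exact lt_of_le_of_lt this (max_lt hu' hu)
        exact mul_lt_mul_of_pos_left this (zero_lt_iff.mpr hva0)
      have h2 : v (b * (w' - w)) < γ * v a := by
        rw [Valuation.map_mul, hvab, mul_comm γ (v b)]
        have : v (w' - w) < γ := by
          have : v (w' - w) ≤ max (v (w' - 1)) (v (w - 1)) := by
            have : w' - w = (w' - 1) - (w - 1) := by ring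
            rw [this]; exact Valuation.map_sub v _ _
          exact lt_of_le_of_lt this (max_lt hw' hw)
        exact mul_lt_mul_of_pos_left this (zero_lt_iff.mpr (hvab ▸ hva0))
      exact lt_of_le_of_lt (Valuation.map_add v _ _) (max_lt h1 h2)
    · intro hz
      refine ⟨a * (u + z / a), ⟨u + z / a, ?_, rfl⟩, b * w, ⟨w, hw, rfl⟩, ?_⟩
      · have hza : v (z / a) < γ := by
          rw [Valuation.map_div]
          rw [div_lt_iff₀ (by simpa [zero_lt_iff] using hva0)]
          exact hz
        have : u + z / a - 1 = (u - 1) + z / a := by ring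
        rw [this]
        exact lt_of_le_of_lt (Valuation.map_add v _ _) (max_lt hu hza)
      · field_simp
        linear_combination -hsum
  · intro hS
    rw [hS]
    have hM : max (v a) (v b) ≠ 0 := by
      rcases not_and_or.mp hab with h | h
      · exact fun hm => h ((Valuation.zero_iff v).mp (le_antisymm
          (le_trans (le_max_left _ _) hm.le) zero_le'))
      · exact fun hm => h ((Valuation.zero_iff v).mp (le_antisymm
          (le_trans (le_max_right _ _) hm.le) zero_le'))
    simp only [Set.mem_setOf_eq, map_zero]
    exact zero_lt_iff.mpr (mul_ne_zero hγ0 hM)
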